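/- For n ≥ 2, the full automorphism group of the thagomizer matroid T_n is isomorphic to the hyperoctahedral group B_n = C_2 ≀ S_n ≅ C_2^n ⋊ S_n, generated by permutations of the n spikes {a_i, b_i} and by the n independent transpositions swapping a_i with b_i. -/

import Mathlib

inductive TnEdge (n : ℕ) : Type
  | spine : TnEdge n
  | a (i : Fin n) : TnEdge n
  | b (i : Fin n) : TnEdge n
  deriving DecidableEq, Fintype

open TnEdge

def TnIndep (n : ℕ) (S : Set (TnEdge n)) : Prop :=
  (∀ i : Fin n, ¬ ({spine, a i, b i} : Set (TnEdge n)) ⊆ S) ∧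
  (∀ i j : Fin n, i ≠ j → ¬ ({a i, b i, a j, b j} : Set (TnEdge n)) ⊆ S)

/-- The automorphism group of a matroid: all permutations of the ground type that
preserve independence. -/
def matroidAutGroup {α : Type*} (M : Matroid α) : Subgroup (Equiv.Perm α) where
  carrier := {e | ∀ S : Set α, M.Indep (e '' S) ↔ M.Indep S}
  one_mem' := by intro S; simp
  mul_mem' := by
    intro x y hx hy S
    rw [show ⇑(x * y) = ⇑x ∘ ⇑y from rfl, Set.image_comp]
    rw [hx, hy]
  inv_mem' := by
    intro x hx S
    have h := (hx (⇑x⁻¹ '' S)).symm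
    rwa [show ⇑x '' (⇑x⁻¹ '' S) = S by simp] at h

/-- A permutation of the spikes of the thagomizer matroid. -/
def spikePerm {n : ℕ} (σ : Equiv.Perm (Fin n)) : Equiv.Perm (TnEdge n) where
  toFun e := match e with | spine => spine | a i => a (σ i) | b i => b (σ i)
  invFun e := match e with | spine => spine | a i => a (σ.symm i) | b i => b (σ.symm i)
  left_inv e := by cases e <;> simp
  right_inv e := by cases e <;> simp

/-- The swap of the two edges of the `i`-th spike. -/
def spikeSwap {n : ℕ} (i : Fin n) : Equiv.Perm (TnEdge n) :=
  Equiv.swap (a i) (b i)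

/-- The permutation action of `S_n` on the group `C_2^n`. -/
def permAutHom (n : ℕ) :
    Equiv.Perm (Fin n) →* MulAut (Fin n → Multiplicative (ZMod 2)) where
  toFun σ := MulEquiv.arrowCongr σ (MulEquiv.refl _)
  map_one' := rfl
  map_mul' _ _ := rfl

/-- The hyperoctahedral group `B_n = C_2 ≀ S_n = C_2^n ⋊ S_n`. -/
def hyperoctahedral (n : ℕ) : Type :=
  SemidirectProduct (Fin n → Multiplicative (ZMod 2)) (Equiv.Perm (Fin n)) (permAutHom n)

noncomputable instance (n : ℕ) : Group (hyperoctahedral n) :=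
  inferInstanceAs (Group (SemidirectProduct _ _ _))

namespace TA

abbrev C2 := Multiplicative (ZMod 2)

lemma two_cases : ∀ x : C2, x = 1 ∨ x = Multiplicative.ofAdd (1 : ZMod 2) := by decide

lemma ofAdd_ne_one : (Multiplicative.ofAdd (1 : ZMod 2)) ≠ 1 := by decide

def swFun {n : ℕ} (f : Fin n → C2) : TnEdge n → TnEdge n := fun e =>
  match e with
  | spine => spine
  | a i => if f i = 1 then a i else b i
  | b i => if f i = 1 then b i else a i

lemma swFun_invol {n : ℕ} (f : Fin n → C2) : Function.Involutive (swFun f) := by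
  intro e
  cases e with
  | spine => rfl
  | a i => by_cases h : f i = 1 <;> simp [swFun, h]
  | b i => by_cases h : f i = 1 <;> simp [swFun, h]

def sw {n : ℕ} (f : Fin n → C2) : Equiv.Perm (TnEdge n) := (swFun_invol f).toPerm

@[simp] lemma sw_spine {n} (f : Fin n → C2) : sw f spine = spine := rfl
@[simp] lemma sw_a {n} (f : Fin n → C2) (i) : sw f (a i) = if f i = 1 then a i else b i := rfl
@[simp] lemma sw_b {n} (f : Fin n → C2) (i) : sw f (b i) = if f i = 1 then b i else a i := rfl
@[simp] lemma sw_symm {n} (f : Fin n → C2) : (sw f).symm = sw f := rfl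

@[simp] lemma spikePerm_spine {n} (σ : Equiv.Perm (Fin n)) : spikePerm σ spine = spine := rfl
@[simp] lemma spikePerm_a {n} (σ : Equiv.Perm (Fin n)) (i) : spikePerm σ (a i) = a (σ i) := rfl
@[simp] lemma spikePerm_b {n} (σ : Equiv.Perm (Fin n)) (i) : spikePerm σ (b i) = b (σ i) := rfl
@[simp] lemma spikePerm_symm {n} (σ : Equiv.Perm (Fin n)) :
    (spikePerm σ).symm = spikePerm σ.symm := by
  ext e; cases e <;> rfl

lemma sw_mul {n : ℕ} (f g : Fin n → C2) : sw (f * g) = sw f * sw g := by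
  ext e
  cases e with
  | spine => rfl
  | a i =>
      simp only [Equiv.Perm.mul_apply, sw_a, Pi.mul_apply]
      rcases two_cases (f i) with hf | hf <;> rcases two_cases (g i) with hg | hg <;>
        simp [hf, hg, ofAdd_ne_one] <;> decide
  | b i =>
      simp only [Equiv.Perm.mul_apply, sw_b, Pi.mul_apply]
      rcases two_cases (f i) with hf | hf <;> rcases two_cases (g i) with hg | hg <;>
        simp [hf, hg, ofAdd_ne_one] <;> decide

lemma sw_one {n : ℕ} : sw (1 : Fin n → C2) = 1 := by
  ext e; cases e <;> simp

lemma spikePerm_mul {n : ℕ} (σ τ : Equiv.Perm (Fin n)) :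
    spikePerm (σ * τ) = spikePerm σ * spikePerm τ := by
  ext e; cases e <;> rfl

lemma spikePerm_one {n : ℕ} : spikePerm (1 : Equiv.Perm (Fin n)) = 1 := by
  ext e; cases e <;> rfl

end TA


namespace TA2
open TA

lemma sw_conj {n : ℕ} (σ : Equiv.Perm (Fin n)) (f : Fin n → C2) :
    sw (f ∘ σ.symm) = spikePerm σ * sw f * (spikePerm σ)⁻¹ := by
  ext e
  cases e with
  | spine => rfl
  | a i =>
      by_cases h : f (σ.symm i) = 1 <;>
        simp [Equiv.Perm.mul_apply, Equiv.Perm.inv_def, h]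
  | b i =>
      by_cases h : f (σ.symm i) = 1 <;>
        simp [Equiv.Perm.mul_apply, Equiv.Perm.inv_def, h]

def swHom {n : ℕ} : (Fin n → C2) →* Equiv.Perm (TnEdge n) where
  toFun := sw
  map_one' := sw_one
  map_mul' := sw_mul

def spHom {n : ℕ} : Equiv.Perm (Fin n) →* Equiv.Perm (TnEdge n) where
  toFun := spikePerm
  map_one' := spikePerm_one
  map_mul' := spikePerm_mul

end TA2


namespace TA3
open TA TA2

lemma compat {n : ℕ} : ∀ g : Equiv.Perm (Fin n),
    (swHom (n := n)).comp ((permAutHom n g)).toMonoidHom =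
      (MulAut.conj (spHom g)).toMonoidHom.comp swHom := by
  intro g
  refine MonoidHom.ext fun f => ?_
  show sw (MulEquiv.arrowCongr g (MulEquiv.refl C2) f) = spikePerm g * sw f * (spikePerm g)⁻¹
  have : (MulEquiv.arrowCongr g (MulEquiv.refl C2) f) = f ∘ g.symm := rfl
  rw [this, sw_conj]

def bigPhi (n : ℕ) : hyperoctahedral n →* Equiv.Perm (TnEdge n) :=
  SemidirectProduct.lift swHom spHom compat

lemma bigPhi_apply {n : ℕ} (x : hyperoctahedral n) :
    bigPhi n x = sw (SemidirectProduct.left x) * spikePerm (SemidirectProduct.right x) := rfl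

lemma bigPhi_inj {n : ℕ} : Function.Injective (bigPhi n) := by
  rw [injective_iff_map_eq_one]
  intro x hx
  have hfix : ∀ i : Fin n, SemidirectProduct.right x i = i ∧
      SemidirectProduct.left x (SemidirectProduct.right x i) = 1 := by
    intro i
    have h : (bigPhi n x) (a i) = a i := by rw [hx]; rfl
    rw [bigPhi_apply] at h
    simp only [Equiv.Perm.mul_apply, spikePerm_a, sw_a] at h
    rcases two_cases (SemidirectProduct.left x (SemidirectProduct.right x i)) with h1 | h1
    · rw [h1] at h
      simp at h
      exact ⟨h, h1⟩
    · rw [h1] at h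
      simp [ofAdd_ne_one] at h
  have hr : SemidirectProduct.right x = 1 := Equiv.ext fun i => (hfix i).1
  have hl : SemidirectProduct.left x = 1 := by
    funext j
    have h2 := (hfix j).2
    rw [(hfix j).1] at h2
    exact h2
  exact SemidirectProduct.ext hl hr

end TA3


namespace TA4
open TA TA2 TA3

variable {n : ℕ} (f : Fin n → C2) (σ : Equiv.Perm (Fin n))

lemma Esymm_spine : (sw f * spikePerm σ).symm spine = spine := by
  rw [Equiv.symm_apply_eq]; rfl

lemma Esymm_a (i : Fin n) :
    (sw f * spikePerm σ).symm (a i) =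
      if f i = 1 then a (σ.symm i) else b (σ.symm i) := by
  rw [Equiv.symm_apply_eq]
  by_cases h : f i = 1 <;> simp [Equiv.Perm.mul_apply, h]

lemma Esymm_b (i : Fin n) :
    (sw f * spikePerm σ).symm (b i) =
      if f i = 1 then b (σ.symm i) else a (σ.symm i) := by
  rw [Equiv.symm_apply_eq]
  by_cases h : f i = 1 <;> simp [Equiv.Perm.mul_apply, h]

lemma TnIndep_image {S : Set (TnEdge n)} (h : TnIndep n S) :
    TnIndep n ((sw f * spikePerm σ) '' S) := by
  obtain ⟨h1, h2⟩ := h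
  constructor
  · intro i hsub
    apply h1 (σ.symm i)
    have m1 := hsub (show spine ∈ ({spine, a i, b i} : Set _) by simp)
    have m2 := hsub (show a i ∈ ({spine, a i, b i} : Set _) by simp)
    have m3 := hsub (show b i ∈ ({spine, a i, b i} : Set _) by simp)
    rw [Set.mem_image_equiv] at m1 m2 m3
    rw [Esymm_spine] at m1
    rw [Esymm_a] at m2
    rw [Esymm_b] at m3
    intro z hz
    simp only [Set.mem_insert_iff, Set.mem_singleton_iff] at hz
    rcases hz with rfl | rfl | rfl
    · exact m1
    · by_cases hf : f i = 1
      · rw [if_pos hf] at m2; exact m2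
      · rw [if_neg hf] at m3; exact m3
    · by_cases hf : f i = 1
      · rw [if_pos hf] at m3; exact m3
      · rw [if_neg hf] at m2; exact m2
  · intro i j hij hsub
    apply h2 (σ.symm i) (σ.symm j) (fun hc => hij (σ.symm.injective hc))
    have m2 := hsub (show a i ∈ ({a i, b i, a j, b j} : Set _) by simp)
    have m3 := hsub (show b i ∈ ({a i, b i, a j, b j} : Set _) by simp)
    have m4 := hsub (show a j ∈ ({a i, b i, a j, b j} : Set _) by simp)
    have m5 := hsub (show b j ∈ ({a i, b i, a j, b j} : Set _) by simp)
    rw [Set.mem_image_equiv] at m2 m3 m4 m5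
    rw [Esymm_a] at m2 m4
    rw [Esymm_b] at m3 m5
    intro z hz
    simp only [Set.mem_insert_iff, Set.mem_singleton_iff] at hz
    rcases hz with rfl | rfl | rfl | rfl
    · by_cases hf : f i = 1
      · rw [if_pos hf] at m2; exact m2
      · rw [if_neg hf] at m3; exact m3
    · by_cases hf : f i = 1
      · rw [if_pos hf] at m3; exact m3
      · rw [if_neg hf] at m2; exact m2
    · by_cases hf : f j = 1
      · rw [if_pos hf] at m4; exact m4
      · rw [if_neg hf] at m5; exact m5
    · by_cases hf : f j = 1
      · rw [if_pos hf] at m5; exact m5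
      · rw [if_neg hf] at m4; exact m4

end TA4


namespace TA5
open TA TA2 TA3

variable {n : ℕ}

lemma sw_delta (j : Fin n) (c : C2) (hc : c ≠ 1) :
    sw (Function.update (1 : Fin n → C2) j c) = spikeSwap j := by
  ext e
  cases e with
  | spine =>
      rw [sw_spine]
      exact (Equiv.swap_apply_of_ne_of_ne (by simp) (by simp)).symm
  | a i =>
      by_cases h : i = j
      · subst h
        simp [spikeSwap, Function.update_self, hc]
      · simp [spikeSwap, Function.update_apply, h,
          Equiv.swap_apply_of_ne_of_ne, (by simp [h] : a i ≠ a j), (by simp : a i ≠ b j)]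
  | b i =>
      by_cases h : i = j
      · subst h
        simp [spikeSwap, Function.update_self, hc]
      · simp [spikeSwap, Function.update_apply, h,
          Equiv.swap_apply_of_ne_of_ne, (by simp : b i ≠ a j), (by simp [h] : b i ≠ b j)]

lemma sw_mem_closure (f : Fin n → C2) :
    sw f ∈ Subgroup.closure
      (Set.range (spikePerm (n := n)) ∪ Set.range (spikeSwap (n := n))) := by
  set G := Subgroup.closure
      (Set.range (spikePerm (n := n)) ∪ Set.range (spikeSwap (n := n))) with hG
  have key : ∀ s : Finset (Fin n), ∀ f : Fin n → C2, (∀ i, f i ≠ 1 → i ∈ s) → sw f ∈ G := by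
    intro s
    induction s using Finset.induction_on with
    | empty =>
        intro f hf
        have hf1 : f = 1 := funext fun i => by
          by_contra h
          exact absurd (hf i h) (Finset.notMem_empty i)
        rw [hf1, sw_one]
        exact one_mem G
    | insert j t hjt ih =>
        intro f hf
        set f' := Function.update f j 1 with hf'def
        have hf' : ∀ i, f' i ≠ 1 → i ∈ t := by
          intro i hi
          by_cases h : i = j
          · subst h
            simp [hf'def, Function.update_self] at hi
          · have : f' i = f i := by simp [hf'def, Function.update_apply, h]
            rw [this] at hi
            rcases Finset.mem_insert.mp (hf i hi) with h' | h'
            · exact absurd h' h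
            · exact h'
        have h1 : sw f' ∈ G := ih f' hf'
        by_cases hj : f j = 1
        · have : f' = f := Function.update_eq_self_iff.mpr hj.symm
          rwa [this] at h1
        · have hd : f = f' * Function.update (1 : Fin n → C2) j (f j) := by
            funext i
            by_cases h : i = j <;>
              simp [hf'def, Function.update_apply, h]
          rw [hd, sw_mul]
          exact mul_mem h1 (Subgroup.subset_closure (Or.inr ⟨j, (sw_delta j (f j) hj).symm⟩))
  exact key Finset.univ f (fun i _ => Finset.mem_univ i)

lemma spikePerm_mem_closure (σ : Equiv.Perm (Fin n)) :
    spikePerm σ ∈ Subgroup.closure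
      (Set.range (spikePerm (n := n)) ∪ Set.range (spikeSwap (n := n))) :=
  Subgroup.subset_closure (Or.inl ⟨σ, rfl⟩)

end TA5


namespace TA6
open TA TA2 TA3

lemma four_not_subset_three {α : Type*} {p q r s u v w : α}
    (hpq : p ≠ q) (hpr : p ≠ r) (hps : p ≠ s) (hqr : q ≠ r) (hqs : q ≠ s) (hrs : r ≠ s) :
    ¬ ({p, q, r, s} : Set α) ⊆ {u, v, w} := by
  intro hsub
  have hfin : ({u, v, w} : Set α).Finite :=
    ((Set.finite_singleton w).insert v).insert u
  have h4 : ({p, q, r, s} : Set α).ncard = 4 := by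
    rw [Set.ncard_insert_of_notMem (by simp [hpq, hpr, hps])
          (((Set.finite_singleton s).insert r).insert q),
        Set.ncard_insert_of_notMem (by simp [hqr, hqs])
          ((Set.finite_singleton s).insert r),
        Set.ncard_insert_of_notMem (by simp [hrs]) (Set.finite_singleton s),
        Set.ncard_singleton]
  have h3 : ({u, v, w} : Set α).ncard ≤ 3 := by
    refine le_trans (Set.ncard_insert_le _ _) ?_
    have h2 := Set.ncard_insert_le v ({w} : Set α)
    rw [Set.ncard_singleton] at h2
    omega
  have := Set.ncard_le_ncard hsub hfin
  omega

variable {n : ℕ}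

lemma aut_decomp (hn : 2 ≤ n) (M : Matroid (TnEdge n))
    (hInd : ∀ S, M.Indep S ↔ TnIndep n S)
    (e : Equiv.Perm (TnEdge n)) (he : ∀ S, M.Indep (⇑e '' S) ↔ M.Indep S) :
    ∃ x : hyperoctahedral n, e = bigPhi n x := by
  classical
  have einj := e.injective
  have img : ∀ i : Fin n, ¬ TnIndep n (⇑e '' {spine, a i, b i}) := by
    intro i h
    have hdep : ¬ TnIndep n ({spine, a i, b i} : Set (TnEdge n)) := fun hi => hi.1 i subset_rfl
    exact hdep ((hInd _).mp ((he _).mp ((hInd _).mpr h)))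
  have imgset : ∀ i : Fin n,
      ⇑e '' ({spine, a i, b i} : Set (TnEdge n)) = {e spine, e (a i), e (b i)} := by
    intro i; simp [Set.image_insert_eq]
  have key0 : ∀ i : Fin n, ∃ k,
      ({spine, a k, b k} : Set (TnEdge n)) ⊆ {e spine, e (a i), e (b i)} := by
    intro i
    have h := img i
    rw [imgset i] at h
    rcases not_and_or.mp h with h | h
    · push_neg at h
      obtain ⟨k, hk⟩ := h
      exact ⟨k, hk⟩
    · push_neg at h
      obtain ⟨k, l, hkl, hsub⟩ := h
      exact absurd hsub
        (four_not_subset_three (by simp) (by simp [hkl]) (by simp)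
          (by simp) (by simp [hkl]) (by simp))
  have hspine : e spine = spine := by
    by_contra hne
    obtain ⟨k, hk⟩ := key0 ⟨0, by omega⟩
    obtain ⟨l, hl⟩ := key0 ⟨1, by omega⟩
    have m1 := hk (show spine ∈ ({spine, a k, b k} : Set (TnEdge n)) by simp)
    have m2 := hl (show spine ∈ ({spine, a l, b l} : Set (TnEdge n)) by simp)
    simp only [Set.mem_insert_iff, Set.mem_singleton_iff] at m1 m2
    rcases m1 with m1 | m1 | m1 <;> rcases m2 with m2 | m2 | m2 <;>
      first
        | exact hne m1.symm
        | exact hne m2.symm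
        | (have h := einj (m1.symm.trans m2); simp [Fin.ext_iff] at h)
  have key : ∀ i : Fin n, ∃ k,
      (e (a i) = a k ∧ e (b i) = b k) ∨ (e (a i) = b k ∧ e (b i) = a k) := by
    intro i
    obtain ⟨k, hk⟩ := key0 i
    have m2 := hk (show a k ∈ ({spine, a k, b k} : Set (TnEdge n)) by simp)
    have m3 := hk (show b k ∈ ({spine, a k, b k} : Set (TnEdge n)) by simp)
    rw [hspine] at m2 m3
    simp only [Set.mem_insert_iff, Set.mem_singleton_iff] at m2 m3
    rcases m2 with m2 | m2 | m2
    · exact absurd m2 (by simp)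
    · rcases m3 with m3 | m3 | m3
      · exact absurd m3 (by simp)
      · exact absurd (m2.trans m3.symm) (by simp)
      · exact ⟨k, Or.inl ⟨m2.symm, m3.symm⟩⟩
    · rcases m3 with m3 | m3 | m3
      · exact absurd m3 (by simp)
      · exact ⟨k, Or.inr ⟨m3.symm, m2.symm⟩⟩
      · exact absurd (m2.trans m3.symm) (by simp)
  choose σ0 hσ0 using key
  have hσinj : Function.Injective σ0 := by
    intro i j hij
    rcases hσ0 i with ⟨h1, h2⟩ | ⟨h1, h2⟩ <;> rcases hσ0 j with ⟨h3, h4⟩ | ⟨h3, h4⟩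
    · have h5 : e (a i) = e (a j) := by rw [h1, h3, hij]
      have h6 := einj h5; simpa using h6
    · have h5 : e (a i) = e (b j) := by rw [h1, h4, hij]
      have h6 := einj h5; simp at h6
    · have h5 : e (a i) = e (b j) := by rw [h1, h4, hij]
      have h6 := einj h5; simp at h6
    · have h5 : e (a i) = e (a j) := by rw [h1, h3, hij]
      have h6 := einj h5; simpa using h6
  have hσbij := Finite.injective_iff_bijective.mp hσinj
  refine ⟨SemidirectProduct.mk
    (fun k => if e (a ((Equiv.ofBijective σ0 hσbij).symm k)) = a k then 1
      else Multiplicative.ofAdd (1 : ZMod 2))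
    (Equiv.ofBijective σ0 hσbij), ?_⟩
  set σ : Equiv.Perm (Fin n) := Equiv.ofBijective σ0 hσbij with hσdef
  have hσapp : ∀ i, σ i = σ0 i := fun i => rfl
  have hσsymm : ∀ i, σ.symm (σ0 i) = i := fun i => σ.symm_apply_apply i
  erw [bigPhi_apply]
  ext z
  cases z with
  | spine => simpa [Equiv.Perm.mul_apply] using hspine
  | a i =>
      simp only [Equiv.Perm.mul_apply, spikePerm_a, sw_a, SemidirectProduct.mk_eq_inl_mul_inr]
      rcases hσ0 i with ⟨h1, h2⟩ | ⟨h1, h2⟩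
      · have hc : e (a (σ.symm (σ i))) = a (σ i) := by rw [σ.symm_apply_apply i]; exact h1
        rw [if_pos hc, if_pos rfl]
        exact h1
      · have hc : ¬ (e (a (σ.symm (σ i))) = a (σ i)) := by
          rw [σ.symm_apply_apply i, h1]; simp
        rw [if_neg hc, if_neg ofAdd_ne_one]
        exact h1
  | b i =>
      simp only [Equiv.Perm.mul_apply, spikePerm_b, sw_b]
      rcases hσ0 i with ⟨h1, h2⟩ | ⟨h1, h2⟩
      · have hc : e (a (σ.symm (σ i))) = a (σ i) := by rw [σ.symm_apply_apply i]; exact h1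
        rw [if_pos hc, if_pos rfl]
        exact h2
      · have hc : ¬ (e (a (σ.symm (σ i))) = a (σ i)) := by
          rw [σ.symm_apply_apply i, h1]; simp
        rw [if_neg hc, if_neg ofAdd_ne_one]
        exact h2

end TA6


open TA TA2 TA3 TA4 TA5 TA6 in
theorem thagomizer_aut_group (n : ℕ) (hn : 2 ≤ n) (M : Matroid (TnEdge n))
    (hE : M.E = Set.univ) (hInd : ∀ S, M.Indep S ↔ TnIndep n S) :
    matroidAutGroup M =
      Subgroup.closure (Set.range (spikePerm (n := n)) ∪ Set.range (spikeSwap (n := n))) ∧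
    Nonempty (matroidAutGroup M ≃* hyperoctahedral n) := by
  classical
  have h1 : ∀ x : hyperoctahedral n, bigPhi n x ∈ matroidAutGroup M := by
    intro x S
    rw [hInd, hInd]
    constructor
    · intro h
      have h2 := TnIndep_image (SemidirectProduct.left x⁻¹)
        (SemidirectProduct.right x⁻¹) h
      erw [← bigPhi_apply (x := x⁻¹), map_inv] at h2
      rwa [show ⇑(bigPhi n x)⁻¹ '' (⇑(bigPhi n x) '' S) = S by
        rw [Equiv.Perm.inv_def]; exact Equiv.symm_image_image _ _] at h2
    · intro h
      have h2 := TnIndep_image (SemidirectProduct.left x) (SemidirectProduct.right x) h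
      rwa [← bigPhi_apply] at h2
  have hdecomp : ∀ e ∈ matroidAutGroup M, ∃ x : hyperoctahedral n, e = bigPhi n x :=
    fun e he => aut_decomp hn M hInd e he
  have hclosure_le :
      Subgroup.closure (Set.range (spikePerm (n := n)) ∪ Set.range (spikeSwap (n := n))) ≤
        matroidAutGroup M := by
    rw [Subgroup.closure_le]
    rintro g (⟨σ, rfl⟩ | ⟨i, rfl⟩)
    · have : spikePerm σ = bigPhi n (SemidirectProduct.mk 1 σ) := by
        erw [bigPhi_apply]
        show spikePerm σ = sw 1 * spikePerm σ
        rw [sw_one, one_mul]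
      rw [this]; exact h1 _
    · have : spikeSwap i = bigPhi n (SemidirectProduct.mk
          (Function.update (1 : Fin n → C2) i (Multiplicative.ofAdd (1 : ZMod 2))) 1) := by
        erw [bigPhi_apply]
        show spikeSwap i = sw _ * spikePerm 1
        rw [spikePerm_one, mul_one, sw_delta i _ ofAdd_ne_one]
      rw [this]; exact h1 _
  have haut_le : matroidAutGroup M ≤
      Subgroup.closure (Set.range (spikePerm (n := n)) ∪ Set.range (spikeSwap (n := n))) := by
    intro e he
    obtain ⟨x, rfl⟩ := hdecomp e he
    rw [bigPhi_apply]
    exact mul_mem (sw_mem_closure _) (spikePerm_mem_closure _)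
  have hrange_eq : (bigPhi n).range = matroidAutGroup M := by
    apply le_antisymm
    · rintro g ⟨x, rfl⟩; exact h1 x
    · intro e he
      obtain ⟨x, rfl⟩ := hdecomp e he
      exact ⟨x, rfl⟩
  refine ⟨le_antisymm haut_le hclosure_le, ?_⟩
  exact ⟨((MonoidHom.ofInjective bigPhi_inj).trans (MulEquiv.subgroupCongr hrange_eq)).symm⟩
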